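/- Let p ∈ (1,∞), E, F Banach spaces, and T : E → F a right p-nuclear operator, i.e., T(x) = ∑_n x_n*(x) y_n with (x_n*) weakly p*-summable in E* and (y_n) ∈ ℓ_p(F), the series converging in operator norm. Then T(B_E) is a relatively p-compact subset of F. -/

import Mathlib

open scoped BigOperators Classical

noncomputable section

variable {E : Type*} [NormedAddCommGroup E] [NormedSpace ℂ E]

/-- Coefficient sequences: the closed unit ball of `ℓ_{p*}` (where `p* = p/(p-1)`)
for `p > 1`, and the closed unit ball of `c₀` for `p = 1`. -/
def CoefBall (p : ℝ) (a : ℕ → ℂ) : Prop :=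
  if p = 1 then
    Filter.Tendsto (fun n => ‖a n‖) Filter.atTop (nhds 0) ∧ ∀ n, ‖a n‖ ≤ 1
  else
    ∀ s : Finset ℕ, ∑ n ∈ s, ‖a n‖ ^ (p / (p - 1)) ≤ 1

/-- The `p`-convex hull of a sequence `(x_n)`: all convergent sums `∑ a_n x_n`
with `(a_n)` in the appropriate coefficient ball. -/
def pConv (p : ℝ) (x : ℕ → E) : Set E :=
  {y | ∃ a : ℕ → ℂ, CoefBall p a ∧ HasSum (fun n => a n • x n) y}

/-- A set is relatively `p`-compact if it is contained in the `p`-convex hull of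
some `p`-summable sequence. -/
def RelPCompact (p : ℝ) (K : Set E) : Prop :=
  ∃ x : ℕ → E, Summable (fun n => ‖x n‖ ^ p) ∧ K ⊆ pConv p x

/-- The measure of `p`-compactness of a set `K`. -/
def mKp (p : ℝ) (K : Set E) : ℝ :=
  sInf {r : ℝ | ∃ x : ℕ → E, Summable (fun n => ‖x n‖ ^ p) ∧ K ⊆ pConv p x ∧
    (∑' n, ‖x n‖ ^ p) ^ (1 / p) = r}

end

/-- If `T = ∑ x_n^* ⊗ y_n` is right `p`-nuclear, with `(x_n^*)` weakly
`p^*`-summable in `E^*` and `(y_n) ∈ ℓ_p(F)`, the series converging in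
operator norm, then `T(B_E)` is relatively `p`-compact. -/
theorem stmt18 {E F : Type*} [NormedAddCommGroup E] [NormedSpace ℂ E] [CompleteSpace E]
    [NormedAddCommGroup F] [NormedSpace ℂ F] [CompleteSpace F]
    {p q : ℝ} (hp : 1 < p) (hq : 1 / p + 1 / q = 1)
    (T : E →L[ℂ] F) (xs : ℕ → StrongDual ℂ E) (y : ℕ → F)
    (hxs : ∃ C : ℝ, ∀ e : E, ‖e‖ ≤ 1 → ∀ s : Finset ℕ, ∑ n ∈ s, ‖xs n e‖ ^ q ≤ C)
    (hy : Summable fun n => ‖y n‖ ^ p)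
    (hsum : HasSum (fun n => (xs n).smulRight (y n)) T) :
    RelPCompact p (T '' Metric.closedBall 0 1) := by

  obtain ⟨C₀, hC₀⟩ := hxs
  set C := max C₀ 1 with hCdef
  have hC1 : (1:ℝ) ≤ C := le_max_right _ _
  have hCpos : (0:ℝ) < C := lt_of_lt_of_le one_pos hC1
  have hC : ∀ e : E, ‖e‖ ≤ 1 → ∀ s : Finset ℕ, ∑ n ∈ s, ‖xs n e‖ ^ q ≤ C :=
    fun e he s => (hC₀ e he s).trans (le_max_left _ _)
  have hp0 : (0:ℝ) < p := lt_trans one_pos hp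
  have hq0 : (0:ℝ) < q := by
    have h1 : 1/p < 1 := by rw [div_lt_one hp0]; exact hp
    have h2 : 0 < 1/q := by linarith
    exact one_div_pos.mp h2
  have hqp : p / (p - 1) = q := by
    have hpne : p ≠ 0 := hp0.ne'
    have hqne : q ≠ 0 := hq0.ne'
    have hp1 : p - 1 ≠ 0 := by intro h; exact (by linarith : p ≠ 1) (by linarith)
    field_simp at hq ⊢
    nlinarith [hq]
  set c : ℝ := C ^ (1/q) with hc
  have hc1 : (1:ℝ) ≤ c := Real.one_le_rpow hC1 (by positivity)
  have hcpos : (0:ℝ) < c := lt_of_lt_of_le one_pos hc1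
  have hcq : c ^ q = C := by
    rw [hc, ← Real.rpow_mul hCpos.le, one_div_mul_cancel hq0.ne', Real.rpow_one]
  refine ⟨fun n => (c:ℂ) • y n, ?_, ?_⟩
  · have heq : ∀ n, ‖(c:ℂ) • y n‖ ^ p = c ^ p * ‖y n‖ ^ p := by
      intro n
      rw [norm_smul, Complex.norm_real, Real.norm_eq_abs, abs_of_pos hcpos,
        Real.mul_rpow hcpos.le (norm_nonneg _)]
    exact (summable_congr heq).mpr (hy.mul_left (c ^ p))
  · rintro _ ⟨e, he, rfl⟩
    rw [Metric.mem_closedBall, dist_zero_right] at he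
    have hcne : (c:ℂ) ≠ 0 := by exact_mod_cast hcpos.ne'
    refine ⟨fun n => xs n e / (c:ℂ), ?_, ?_⟩
    · unfold CoefBall
      rw [if_neg (by intro h; rw [h] at hp; exact lt_irrefl 1 hp : p ≠ 1)]
      intro s
      have hnorm : ∀ n, ‖xs n e / (c:ℂ)‖ = ‖xs n e‖ / c := by
        intro n; rw [norm_div, Complex.norm_real, Real.norm_eq_abs, abs_of_pos hcpos]
      have key : ∀ n, ‖xs n e / (c:ℂ)‖ ^ (p/(p-1)) = ‖xs n e‖ ^ q / C := by
        intro n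
        rw [hnorm, hqp, Real.div_rpow (norm_nonneg _) hcpos.le, hcq]
      calc ∑ n ∈ s, ‖xs n e / (c:ℂ)‖ ^ (p/(p-1))
          = (∑ n ∈ s, ‖xs n e‖ ^ q) / C := by
            rw [Finset.sum_div]; exact Finset.sum_congr rfl fun n _ => key n
        _ ≤ 1 := by rw [div_le_one hCpos]; exact hC e he s
    · have h1 : HasSum (fun n => (xs n e) • y n) (T e) := by
        have h2 := hsum.mapL (ContinuousLinearMap.apply ℂ F e)
        simpa using h2
      have heq : ∀ n, (xs n e / (c:ℂ)) • ((c:ℂ) • y n) = (xs n e) • y n := by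
        intro n; rw [smul_smul, div_mul_cancel₀ _ hcne]
      rw [show (fun n => (xs n e / (c:ℂ)) • ((c:ℂ) • y n)) = fun n => (xs n e) • y n from funext heq]
      exact h1
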